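/- Suppose v ∈ S and (K,t) is a characteristic vector of G with r((K,t),S) = 0. Then for every i ∈ ℤ: A(((K,t+2i+1),S)^∨) = ((K,t+2i),S)^∨ + ((K,t+2i+2),S)^∨ if i ≥ 0; A(((K,t+2i+1),S)^∨) = ((K,t),S)^∨ if i = −1; and A(((K,t+2i+1),S)^∨) = ((K,t+2i+2),S)^∨ + ((K,t+2i+4),S)^∨ if i ≤ −2. -/

import Mathlib

/-!
Common setup: the lattice cohomology complex of a weighted graph
(Némethi; J. Greene, "A surgery triangle for lattice cohomology").

A finite graph `G` with integer weights on vertices and signs on (multi-)edges is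
encoded by its symmetric incidence data `M : V → V → ℤ`: for `u ≠ w` the entry
`M u w` is the signed number of edges joining `u` and `w`, and `M u u = m(u)` is
the weight of `u`.  This is exactly the data of the intersection pairing `(·,·)`
on `L(G) = ℤ⟨E_u : u ∈ V⟩`, via `M u w = (E_u, E_w)`.
-/

noncomputable section

open Function

/-- A graph with integer vertex weights and signed multi-edges, encoded by the
symmetric pairing data `M u w = (E_u, E_w)` on `L(G)`. -/
structure WGraph (V : Type*) where
  M : V → V → ℤ
  symm : ∀ u w, M u w = M w u

variable {V : Type*} [Fintype V] [DecidableEq V]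

/-- Evaluation of `K ∈ Hom(L(G), ℤ)` (recorded by its components `K u = K(E_u)`)
on a lattice vector `x = ∑ x_u E_u ∈ L(G)`. -/
def evalK (K x : V → ℤ) : ℤ := ∑ u, K u * x u

/-- `E_T = ∑_{j ∈ T} E_j ∈ L(G)`. -/
def eVec (T : Finset V) : V → ℤ := fun u => if u ∈ T then 1 else 0

/-- Splitting a sum over `V` at a vertex `v`. -/
theorem sum_split (v : V) (f : V → ℤ) :
    ∑ u, f u = f v + ∑ u : {u : V // u ≠ v}, f u.1 := by
  rw [Fintype.sum_eq_add_sum_compl v f]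
  congr 1
  exact Finset.sum_subtype _ (fun x => by simp) f

namespace WGraph

/-- The symmetric bilinear pairing `(x, y)` on `L(G)`. -/
def pair (G : WGraph V) (x y : V → ℤ) : ℤ := ∑ u, ∑ w, G.M u w * x u * y w

/-- `K ∈ Hom(L(G),ℤ)` is characteristic: `(K,x) ≡ (x,x) (mod 2)` for all `x ∈ L(G)`. -/
def IsChar (G : WGraph V) (K : V → ℤ) : Prop :=
  ∀ x : V → ℤ, evalK K x ≡ G.pair x x [ZMOD 2]

/-- The set `Char(G)` of characteristic vectors, as a type. -/
def Ch (G : WGraph V) : Type _ := {K : V → ℤ // G.IsChar K}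

/-- `K + 2x ∈ Hom(L(G),ℤ)`, for `K ∈ Hom(L(G),ℤ)` and `x ∈ L(G)` (a lattice vector
is viewed in `Hom(L(G),ℤ)` via the pairing). -/
def chAdd (G : WGraph V) (K x : V → ℤ) : V → ℤ := fun u => K u + 2 * G.pair x (eVec {u})

/-- The difference `q(K + 2x) − q(K) = −((K,x) + (x,x))/2`, where `q(y) = −(y,y)/8`;
it is an integer whenever `K` is characteristic. -/
def qdiff (G : WGraph V) (K x : V → ℤ) : ℤ := (-(evalK K x + G.pair x x)) / 2

/-- The difference `q(K,S) − q(K) = max { q(K + 2E_T) − q(K) : T ⊆ S }`, where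
`q(K,S) = max { q(K + 2 ∑_{j∈T} E_j) : T ⊆ S }`. -/
def qrel (G : WGraph V) (K : V → ℤ) (S : Finset V) : ℤ :=
  S.powerset.sup' (Finset.powerset_nonempty S) fun T => G.qdiff K (eVec T)

/-- `G₊₁(v)`: increase the weight `m(v)` of the vertex `v` by one. -/
def bump (G : WGraph V) (v : V) : WGraph V where
  M u w := if u = v ∧ w = v then G.M u w + 1 else G.M u w
  symm u w := by
    have h := G.symm u w
    by_cases hu : u = v <;> by_cases hw : w = v <;> simp [hu, hw, h] <;>
      exact G.symm _ _

/-- `G − v`: delete the vertex `v` and all incident edges. -/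
def delete (G : WGraph V) (v : V) : WGraph {u : V // u ≠ v} where
  M u w := G.M u.1 w.1
  symm u w := G.symm u.1 w.1

theorem evalK_update (L y : V → ℤ) (v : V) (c : ℤ) :
    evalK (Function.update L v (L v + c)) y = evalK L y + c * y v := by
  unfold evalK
  have h : ∀ u, Function.update L v (L v + c) u * y u
      = L u * y u + (if u = v then c * y u else 0) := by
    intro u
    rcases eq_or_ne u v with hu | hu <;> simp [hu, Function.update] <;> ring
  simp only [h]
  rw [Finset.sum_add_distrib, Finset.sum_ite_eq' Finset.univ v (fun u => c * y u)]
  simp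

theorem IsChar.chAdd {G : WGraph V} {K : V → ℤ} (h : G.IsChar K) (x : V → ℤ) :
    G.IsChar (G.chAdd K x) := by
  intro y
  have key : evalK (G.chAdd K x) y
      = evalK K y + 2 * ∑ u, G.pair x (eVec {u}) * y u := by
    simp only [evalK, WGraph.chAdd, add_mul, mul_assoc]
    rw [Finset.sum_add_distrib, ← Finset.mul_sum]
  have hy := h y
  simp only [Int.ModEq] at hy ⊢
  rw [key]
  omega

theorem pair_bump (G : WGraph V) (v : V) (y : V → ℤ) :
    (G.bump v).pair y y = G.pair y y + y v * y v := by
  unfold pair bump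
  have hu : ∀ u w : V, ((if u = v ∧ w = v then G.M u w + 1 else G.M u w) * y u * y w)
      = G.M u w * y u * y w + (if u = v ∧ w = v then y u * y w else 0) := by
    intro u w
    rcases eq_or_ne u v with h | h <;> rcases eq_or_ne w v with h' | h' <;>
      simp [h, h'] <;> ring
  simp only [hu, Finset.sum_add_distrib]
  congr 1
  have hin : ∀ u : V, (∑ w, if u = v ∧ w = v then y u * y w else 0)
      = if u = v then y u * y v else 0 := by
    intro u
    rcases eq_or_ne u v with h | h
    · simp [h, Finset.sum_ite_eq' Finset.univ v (fun w => y v * y w)]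
    · simp [h]
  rw [Finset.sum_congr rfl (fun u _ => hin u),
    Finset.sum_ite_eq' Finset.univ v (fun u => y u * y v)]
  simp

theorem IsChar.bumpUpdate {G : WGraph V} {L : V → ℤ} (h : G.IsChar L) (v : V) (i : ℤ) :
    (G.bump v).IsChar (Function.update L v (L v + (2 * i + 1))) := by
  intro y
  have h1 := evalK_update L y v (2 * i + 1)
  have h2 := pair_bump G v y
  have hy := h y
  obtain ⟨k, hk⟩ := Int.even_mul_succ_self (y v - 1)
  have hk' : y v * y v - y v = 2 * k := by
    have h5 : (y v - 1) * (y v - 1 + 1) = y v * y v - y v := by ring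
    omega
  have h3 : (2 * i + 1) * y v = 2 * (i * y v) + y v := by ring
  simp only [Int.ModEq] at hy ⊢
  rw [h1, h2, h3]
  omega

theorem IsChar.evenUpdate {G : WGraph V} {L : V → ℤ} (h : G.IsChar L) (v : V) (k : ℤ) :
    G.IsChar (Function.update L v (L v + 2 * k)) := by
  intro y
  have h1 := evalK_update L y v (2 * k)
  have hy := h y
  have h3 : 2 * k * y v = 2 * (k * y v) := by ring
  simp only [Int.ModEq] at hy ⊢
  rw [h1, h3]
  omega

end WGraph

/-- Extension of `K ∈ Hom(L(G−v),ℤ)` to `Hom(L(G),ℤ)` by the value `t` at `v`: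
the vector denoted `(K, t)`. -/
def extV (v : V) (K : {u : V // u ≠ v} → ℤ) (t : ℤ) : V → ℤ :=
  fun u => if h : u = v then t else K ⟨u, h⟩

namespace WGraph

theorem IsChar.extChar {G : WGraph V} {v : V} {K : {u : V // u ≠ v} → ℤ}
    (h : (G.delete v).IsChar K) {t : ℤ} (ht : t ≡ G.M v v [ZMOD 2]) :
    G.IsChar (extV v K t) := by
  intro y
  have h1 : evalK (extV v K t) y = t * y v + evalK K (fun u => y u.1) := by
    unfold evalK
    rw [sum_split v (fun u => extV v K t u * y u)]
    congr 1
    · simp [extV]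
    · exact Finset.sum_congr rfl fun u _ => by simp [extV, u.2]
  have h2 : G.pair y y = (G.delete v).pair (fun u => y u.1) (fun u => y u.1)
      + G.M v v * (y v * y v)
      + 2 * ∑ u : {u : V // u ≠ v}, G.M v u.1 * y v * y u.1 := by
    have step1 : G.pair y y = (∑ w, G.M v w * y v * y w)
        + ∑ u : {u : V // u ≠ v}, ∑ w, G.M u.1 w * y u.1 * y w :=
      sum_split v (fun u => ∑ w, G.M u w * y u * y w)
    have step2 : (∑ w, G.M v w * y v * y w)
        = G.M v v * y v * y v + ∑ w : {w : V // w ≠ v}, G.M v w.1 * y v * y w.1 :=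
      sum_split v _
    have step3 : ∀ u : {u : V // u ≠ v}, (∑ w, G.M u.1 w * y u.1 * y w)
        = G.M u.1 v * y u.1 * y v + ∑ w : {w : V // w ≠ v}, G.M u.1 w.1 * y u.1 * y w.1 :=
      fun u => sum_split v _
    have step4 : (G.delete v).pair (fun u => y u.1) (fun u => y u.1)
        = ∑ u : {u : V // u ≠ v}, ∑ w : {w : V // w ≠ v}, G.M u.1 w.1 * y u.1 * y w.1 := rfl
    have hc : (∑ u : {u : V // u ≠ v}, G.M u.1 v * y u.1 * y v)
        = ∑ u : {u : V // u ≠ v}, G.M v u.1 * y v * y u.1 := by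
      refine Finset.sum_congr rfl fun u _ => ?_
      rw [G.symm u.1 v]; ring
    rw [step1, step2, Finset.sum_congr rfl (fun u _ => step3 u),
      Finset.sum_add_distrib, hc, step4]
    ring
  have hy := h (fun u => y u.1)
  obtain ⟨k, hk⟩ := Int.even_mul_succ_self (y v - 1)
  have hk' : y v * y v - y v = 2 * k := by
    have h5 : (y v - 1) * (y v - 1 + 1) = y v * y v - y v := by ring
    omega
  obtain ⟨a, ha⟩ : (2:ℤ) ∣ t - G.M v v := Int.ModEq.dvd ht.symm
  have e1 : t * y v = G.M v v * y v + 2 * (a * y v) := by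
    have h6 : t = G.M v v + 2 * a := by omega
    rw [h6]; ring
  have e2 : G.M v v * (y v * y v) = G.M v v * y v + 2 * (G.M v v * k) := by
    have h7 : y v * y v = y v + 2 * k := by omega
    rw [h7]; ring
  simp only [Int.ModEq] at hy ⊢
  rw [h1, h2, e1, e2]
  omega

variable {G : WGraph V}

/-- `K + 2x` as a characteristic vector. -/
def Ch.add (K : G.Ch) (x : V → ℤ) : G.Ch := ⟨G.chAdd K.1 x, K.2.chAdd x⟩

/-- For `K = (K', t) ∈ Char(G)`, the characteristic vector
`(K', t + 2i + 1) ∈ Char(G₊₁(v))`. -/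
def Ch.bumpSh (K : G.Ch) (v : V) (i : ℤ) : (G.bump v).Ch :=
  ⟨Function.update K.1 v (K.1 v + (2 * i + 1)), K.2.bumpUpdate v i⟩

/-- For `K = (K', t) ∈ Char(G)`, the characteristic vector `(K', t + 2k) ∈ Char(G)`. -/
def Ch.evenSh (K : G.Ch) (v : V) (k : ℤ) : G.Ch :=
  ⟨Function.update K.1 v (K.1 v + 2 * k), K.2.evenUpdate v k⟩

/-- For `K ∈ Char(G−v)`, the characteristic vector `(K, m(v) + 2i) ∈ Char(G)`. -/
def Ch.extend {v : V} (K : (G.delete v).Ch) (i : ℤ) : G.Ch :=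
  ⟨extV v K.1 (G.M v v + 2 * i),
    K.2.extChar (by show (G.M v v + 2 * i) % 2 = G.M v v % 2; omega)⟩

end WGraph

/-- `𝒯⁺₀ = 𝔽[U,U⁻¹]/(U·𝔽[U])` over `𝔽 = ℤ/2ℤ`: the coefficient at `d ∈ ℕ` records
the coefficient of `U^{−d}`. -/
def Tplus : Type := ℕ →₀ ZMod 2

instance : AddCommGroup Tplus := inferInstanceAs (AddCommGroup (ℕ →₀ ZMod 2))
instance : Module (ZMod 2) Tplus := inferInstanceAs (Module (ZMod 2) (ℕ →₀ ZMod 2))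

/-- The element `U^{-m}` of `𝒯⁺₀`. -/
def Um (m : ℕ) : Tplus := (Finsupp.single m 1 : ℕ →₀ ZMod 2)

/-- Multiplication by `U^e` on `𝒯⁺₀`: `U^e · U^{−d} = U^{−(d−e)}` (which is `0` if `d < e`). -/
def Upow (e : ℤ) (f : Tplus) : Tplus :=
  (Finsupp.comapDomain (fun d : ℕ => (d : ℤ) + e)
    (Finsupp.embDomain ⟨(Nat.cast : ℕ → ℤ), Nat.cast_injective⟩ (f : ℕ →₀ ZMod 2))
    (fun a _ b _ hab => Nat.cast_injective (add_right_cancel hab)) : ℕ →₀ ZMod 2)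

theorem Upow_zero (e : ℤ) : Upow e 0 = 0 := by
  show (Finsupp.comapDomain _ (Finsupp.embDomain _ (0 : ℕ →₀ ZMod 2)) _ : ℕ →₀ ZMod 2)
    = (0 : ℕ →₀ ZMod 2)
  ext d
  simp

/-- `C⁺(G)`: the `𝔽[U]`-module of finitely supported maps `Char(G) × 𝒫(V) → 𝒯⁺₀`. -/
abbrev Cplus (G : WGraph V) : Type _ := (G.Ch × Finset V) →₀ Tplus

/-- The action of (multiplication by) `U` on `C⁺(G)`. -/
def UC (G : WGraph V) (φ : Cplus G) : Cplus G := Finsupp.mapRange (Upow 1) (Upow_zero 1) φ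

/-- `U^{−m} · (K,S)^∨`: the element of `C⁺(G)` supported at the single pair `(K,S)`
with value `U^{−m}`. -/
def dual {G : WGraph V} (p : G.Ch × Finset V) (m : ℕ) : Cplus G :=
  Finsupp.single p (Um m)

/-- The exponent `q(K,S) − q(K, S−w)`. -/
def dExp₁ (G : WGraph V) (K : V → ℤ) (S : Finset V) (w : V) : ℤ :=
  G.qrel K S - G.qrel K (S.erase w)

/-- The exponent `q(K,S) − q(K + 2E_w, S−w)`. -/
def dExp₂ (G : WGraph V) (K : V → ℤ) (S : Finset V) (w : V) : ℤ :=
  G.qrel K S - (G.qdiff K (eVec {w}) + G.qrel (G.chAdd K (eVec {w})) (S.erase w))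

/-- `δ` is the operator on `C⁺(G)` given by
`δ(φ)(K,S) = ∑_{w∈S} [U^{q(K,S)−q(K,S−w)}·φ(K,S−w) + U^{q(K,S)−q(K+2E_w,S−w)}·φ(K+2E_w,S−w)]`. -/
def IsDelta (G : WGraph V) (δ : Cplus G → Cplus G) : Prop :=
  ∀ (φ : Cplus G) (K : G.Ch) (S : Finset V),
    δ φ (K, S) = ∑ w ∈ S,
      (Upow (dExp₁ G K.1 S w) (φ (K, S.erase w))
        + Upow (dExp₂ G K.1 S w) (φ (K.add (eVec {w}), S.erase w)))

/-- The exponent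
`c(i,(K,t),S) = [q((K,t),S) − q(K,t)] − [q'((K,t+2i+1),S) − q'(K,t+2i+1)] + i(i+1)/2`. -/
def cExp (G : WGraph V) (v : V) (i : ℤ) (K : G.Ch) (S : Finset V) : ℤ :=
  G.qrel K.1 S - (G.bump v).qrel (K.bumpSh v i).1 S + i * (i + 1) / 2

/-- `A` is the map `C⁺(G₊₁(v)) → C⁺(G)` given by
`A(φ)((K,t),S) = ∑_{i∈ℤ} U^{c(i,(K,t),S)} · φ((K,t+2i+1),S)`. -/
def IsA (G : WGraph V) (v : V) (A : Cplus (G.bump v) → Cplus G) : Prop :=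
  ∀ (φ : Cplus (G.bump v)) (K : G.Ch) (S : Finset V),
    A φ (K, S) = ∑ᶠ i : ℤ, Upow (cExp G v i K S) (φ (K.bumpSh v i, S))

/-- A subset `S ⊆ V − v` viewed as a subset of `V`. -/
def liftS (v : V) (S : Finset {u : V // u ≠ v}) : Finset V :=
  S.map ⟨Subtype.val, Subtype.val_injective⟩

/-- `B` is the map `C⁺(G) → C⁺(G−v)` given by
`B(φ)(K,S) = ∑_{i∈ℤ} φ((K, m(v)+2i), S)`. -/
def IsB (G : WGraph V) (v : V) (B : Cplus G → Cplus (G.delete v)) : Prop :=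
  ∀ (φ : Cplus G) (K : (G.delete v).Ch) (S : Finset {u : V // u ≠ v}),
    B φ (K, S) = ∑ᶠ i : ℤ, φ (K.extend i, liftS v S)

/-- `r((K,t),S) = q((K,t),S−v) − q((K,t)+2E_v,S−v)` (for `v ∈ S`). -/
def rVal (G : WGraph V) (v : V) (K : G.Ch) (S : Finset V) : ℤ :=
  G.qrel K.1 (S.erase v)
    - (G.qdiff K.1 (eVec {v}) + G.qrel (G.chAdd K.1 (eVec {v})) (S.erase v))

/-- The lattice cohomology `ℍ⁺`: the homology of the complex `(C⁺, δ)`. -/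
abbrev Hlat {G : WGraph V} (δ : Cplus G →ₗ[ZMod 2] Cplus G) : Type _ :=
  LinearMap.ker δ ⧸ (LinearMap.range δ).comap (LinearMap.ker δ).subtype

/-- `𝒟₁ ⊆ C⁺(G)`: the `𝔽`-submodule generated by the `U^{−m}·((K,t),S)^∨` with `v ∈ S`. -/
def D1 (G : WGraph V) (v : V) : Submodule (ZMod 2) (Cplus G) :=
  Submodule.span (ZMod 2)
    {χ | ∃ (K : G.Ch) (S : Finset V) (m : ℕ), v ∈ S ∧ χ = dual (K, S) m}

/-- `𝒟₂ ⊆ C⁺(G)`: the `𝔽`-submodule generated by the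
`U^{−m}·[((K,t),S)^∨ + ((K,t+2),S)^∨]` with `v ∉ S`. -/
def D2 (G : WGraph V) (v : V) : Submodule (ZMod 2) (Cplus G) :=
  Submodule.span (ZMod 2)
    {χ | ∃ (K : G.Ch) (S : Finset V) (m : ℕ), v ∉ S ∧
      χ = dual (K, S) m + dual (K.evenSh v 1, S) m}


/-! ### Auxiliary lemmas for Statement 18 -/

section Aux

variable {V : Type*} [Fintype V] [DecidableEq V]

/- ## Tplus lemmas -/

theorem Upow_zero_eq (f : Tplus) : Upow 0 f = f := by
  show (Finsupp.comapDomain _ _ _ : ℕ →₀ ZMod 2) = f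
  ext d
  erw [Finsupp.comapDomain_apply]
  have : ((d : ℤ) + 0) = (⟨(Nat.cast : ℕ → ℤ), Nat.cast_injective⟩ : ℕ ↪ ℤ) d := by simp
  rw [this]
  exact Finsupp.embDomain_apply_self (M := ZMod 2) _ f d

theorem Upow_pos_Um0 (e : ℤ) (he : 0 < e) : Upow e (Um 0) = 0 := by
  show (Finsupp.comapDomain _ _ _ : ℕ →₀ ZMod 2) = 0
  ext d
  erw [Finsupp.comapDomain_apply]
  have h1 : Finsupp.embDomain (⟨(Nat.cast : ℕ → ℤ), Nat.cast_injective⟩ : ℕ ↪ ℤ)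
      (Um 0 : ℕ →₀ ZMod 2) = Finsupp.single ((0:ℕ) : ℤ) 1 := by
    exact Finsupp.embDomain_single _ 0 1
  rw [h1, Finsupp.single_apply, if_neg (by push_cast; omega)]
  simp

/- ## pairing algebra -/

namespace WGraph

variable (G : WGraph V)

theorem pair_symm (x y : V → ℤ) : G.pair x y = G.pair y x := by
  unfold pair
  rw [Finset.sum_comm]
  refine Finset.sum_congr rfl fun u _ => Finset.sum_congr rfl fun w _ => ?_
  rw [G.symm w u]; ring

theorem pair_single (x : V → ℤ) (u : V) :
    G.pair x (eVec {u}) = ∑ a, G.M a u * x a := by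
  unfold pair
  refine Finset.sum_congr rfl fun a _ => ?_
  have : ∀ w, G.M a w * x a * eVec {u} w = if w = u then G.M a u * x a else 0 := by
    intro w
    rcases eq_or_ne w u with rfl | h
    · simp [eVec]
    · simp [eVec, h]
  rw [Finset.sum_congr rfl fun w _ => this w, Finset.sum_ite_eq' Finset.univ u]
  simp

theorem sum_pair_single (x y : V → ℤ) :
    ∑ u, G.pair x (eVec {u}) * y u = G.pair x y := by
  calc ∑ u, G.pair x (eVec {u}) * y u
      = ∑ u, ∑ a, G.M a u * x a * y u := by
        refine Finset.sum_congr rfl fun u _ => ?_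
        rw [G.pair_single x u, Finset.sum_mul]
    _ = ∑ a, ∑ u, G.M a u * x a * y u := Finset.sum_comm
    _ = G.pair x y := rfl

theorem evalK_chAdd (K x y : V → ℤ) :
    evalK (G.chAdd K x) y = evalK K y + 2 * G.pair x y := by
  unfold evalK chAdd
  rw [← sum_pair_single G x y, Finset.mul_sum, ← Finset.sum_add_distrib]
  refine Finset.sum_congr rfl fun u _ => by ring

theorem evalK_add (K x y : V → ℤ) :
    evalK K (fun u => x u + y u) = evalK K x + evalK K y := by
  unfold evalK
  rw [← Finset.sum_add_distrib]
  refine Finset.sum_congr rfl fun u _ => by ring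

theorem pair_expand (x y : V → ℤ) :
    G.pair (fun u => x u + y u) (fun u => x u + y u)
      = G.pair x x + G.pair x y + G.pair y x + G.pair y y := by
  unfold pair
  rw [← Finset.sum_add_distrib, ← Finset.sum_add_distrib, ← Finset.sum_add_distrib]
  refine Finset.sum_congr rfl fun u _ => ?_
  rw [← Finset.sum_add_distrib, ← Finset.sum_add_distrib, ← Finset.sum_add_distrib]
  refine Finset.sum_congr rfl fun w _ => by ring

theorem pair_add_self (x y : V → ℤ) :
    G.pair (fun u => x u + y u) (fun u => x u + y u)
      = G.pair x x + 2 * G.pair x y + G.pair y y := by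
  rw [G.pair_expand x y, G.pair_symm y x]
  ring

theorem char_even {G : WGraph V} {K : V → ℤ} (h : G.IsChar K) (x : V → ℤ) :
    2 ∣ evalK K x + G.pair x x := by
  have := (h x).dvd
  omega

/- ## qdiff identities -/

theorem eVec_insert {v : V} {T : Finset V} (hvT : v ∉ T) :
    eVec (insert v T) = fun u => eVec ({v} : Finset V) u + eVec T u := by
  funext u
  rcases eq_or_ne u v with rfl | h
  · simp [eVec, hvT]
  · simp [eVec, h]

theorem qdiff_update_even {G : WGraph V} {K : V → ℤ} (h : G.IsChar K)
    (v : V) (k : ℤ) (T : Finset V) :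
    G.qdiff (Function.update K v (K v + 2 * k)) (eVec T)
      = G.qdiff K (eVec T) - (if v ∈ T then k else 0) := by
  have hd := char_even h (eVec T)
  have he := evalK_update K (eVec T) v (2 * k)
  unfold qdiff
  rw [he]
  rcases em (v ∈ T) with hv | hv <;> simp only [eVec, hv, if_true, if_false] <;> omega

theorem qdiff_bump_update {G : WGraph V} {K : V → ℤ} (h : G.IsChar K)
    (v : V) (i : ℤ) (T : Finset V) :
    (G.bump v).qdiff (Function.update K v (K v + (2 * i + 1))) (eVec T)
      = G.qdiff K (eVec T) - (if v ∈ T then i + 1 else 0) := by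
  have hd := char_even h (eVec T)
  have he := evalK_update K (eVec T) v (2 * i + 1)
  have hp := G.pair_bump v (eVec T)
  unfold qdiff
  rw [he, hp]
  rcases em (v ∈ T) with hv | hv <;> simp only [eVec, hv, if_true, if_false] <;> omega

theorem qdiff_insert {G : WGraph V} {K : V → ℤ} (h : G.IsChar K)
    (v : V) {T : Finset V} (hvT : v ∉ T) :
    G.qdiff K (eVec (insert v T))
      = G.qdiff K (eVec {v}) + G.qdiff (G.chAdd K (eVec {v})) (eVec T) := by
  have h1 := char_even h (eVec ({v} : Finset V))
  have h2 := char_even (h.chAdd (eVec ({v} : Finset V))) (eVec T)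
  have h3 := G.evalK_chAdd K (eVec ({v} : Finset V)) (eVec T)
  have h4 : evalK K (eVec (insert v T))
      = evalK K (eVec {v}) + evalK K (eVec T) := by
    rw [eVec_insert hvT]; exact evalK_add K _ _
  have h5 : G.pair (eVec (insert v T)) (eVec (insert v T))
      = G.pair (eVec {v}) (eVec {v}) + 2 * G.pair (eVec {v}) (eVec T)
        + G.pair (eVec T) (eVec T) := by
    rw [eVec_insert hvT]; exact G.pair_add_self _ _
  unfold qdiff
  omega

/- ## sup' splitting -/

theorem sup'_add_const {α : Type*} (s : Finset α) (hs : s.Nonempty)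
    (f : α → ℤ) (c : ℤ) :
    s.sup' hs (fun x => f x + c) = s.sup' hs f + c := by
  apply le_antisymm
  · exact Finset.sup'_le _ _ fun x hx => add_le_add_left (Finset.le_sup' f hx) c
  · have : s.sup' hs f ≤ s.sup' hs (fun x => f x + c) - c :=
      Finset.sup'_le _ _ fun x hx =>
        le_sub_iff_add_le.mpr (Finset.le_sup' (fun x => f x + c) hx)
    omega

theorem sup'_powerset_split {v : V} {S : Finset V} (hv : v ∈ S)
    (F : Finset V → ℤ) :
    S.powerset.sup' (Finset.powerset_nonempty S) F
      = max ((S.erase v).powerset.sup' (Finset.powerset_nonempty _) F)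
          ((S.erase v).powerset.sup' (Finset.powerset_nonempty _)
            (fun T => F (insert v T))) := by
  apply le_antisymm
  · refine Finset.sup'_le _ _ fun T hT => ?_
    rw [Finset.mem_powerset] at hT
    rcases em (v ∈ T) with hvT | hvT
    · have h1 : T.erase v ∈ (S.erase v).powerset := by
        rw [Finset.mem_powerset]; exact Finset.erase_subset_erase v hT
      have h2 : F T = F (insert v (T.erase v)) := by rw [Finset.insert_erase hvT]
      rw [h2]
      exact le_trans (Finset.le_sup' (fun T => F (insert v T)) h1) (le_max_right _ _)
    · have h1 : T ∈ (S.erase v).powerset := by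
        rw [Finset.mem_powerset]; exact Finset.subset_erase.mpr ⟨hT, hvT⟩
      exact le_trans (Finset.le_sup' F h1) (le_max_left _ _)
  · refine max_le ?_ ?_
    · refine Finset.sup'_le _ _ fun T hT => ?_
      rw [Finset.mem_powerset] at hT
      have : T ∈ S.powerset := by
        rw [Finset.mem_powerset]; exact hT.trans (Finset.erase_subset _ _)
      exact Finset.le_sup' F this
    · refine Finset.sup'_le _ _ fun T hT => ?_
      rw [Finset.mem_powerset] at hT
      have : insert v T ∈ S.powerset := by
        rw [Finset.mem_powerset]
        exact Finset.insert_subset hv (hT.trans (Finset.erase_subset _ _))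
      exact Finset.le_sup' F this

/- ## qrel computations -/

theorem qrel_update_even {G : WGraph V} {K : V → ℤ} (h : G.IsChar K)
    {v : V} {S : Finset V} (hv : v ∈ S) (k : ℤ) :
    G.qrel (Function.update K v (K v + 2 * k)) S
      = max (G.qrel K (S.erase v))
        (G.qdiff K (eVec {v}) + G.qrel (G.chAdd K (eVec {v})) (S.erase v) - k) := by
  unfold qrel
  rw [sup'_powerset_split hv]
  congr 1
  · refine Finset.sup'_congr _ rfl fun T hT => ?_
    rw [Finset.mem_powerset] at hT
    have hvT : v ∉ T := fun hx => (Finset.mem_erase.mp (hT hx)).1 rfl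
    rw [qdiff_update_even h v k T, if_neg hvT, sub_zero]
  · have : ∀ T ∈ (S.erase v).powerset,
        G.qdiff (Function.update K v (K v + 2 * k)) (eVec (insert v T))
          = G.qdiff (G.chAdd K (eVec {v})) (eVec T) + (G.qdiff K (eVec {v}) - k) := by
      intro T hT
      rw [Finset.mem_powerset] at hT
      have hvT : v ∉ T := fun hx => (Finset.mem_erase.mp (hT hx)).1 rfl
      rw [qdiff_update_even h v k (insert v T), if_pos (Finset.mem_insert_self v T),
        qdiff_insert h v hvT]
      ring
    rw [Finset.sup'_congr _ rfl this, sup'_add_const]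
    ring

theorem qrel_bump_update {G : WGraph V} {K : V → ℤ} (h : G.IsChar K)
    {v : V} {S : Finset V} (hv : v ∈ S) (i : ℤ) :
    (G.bump v).qrel (Function.update K v (K v + (2 * i + 1))) S
      = max (G.qrel K (S.erase v))
        (G.qdiff K (eVec {v}) + G.qrel (G.chAdd K (eVec {v})) (S.erase v) - (i + 1)) := by
  unfold qrel
  rw [sup'_powerset_split hv]
  congr 1
  · refine Finset.sup'_congr _ rfl fun T hT => ?_
    rw [Finset.mem_powerset] at hT
    have hvT : v ∉ T := fun hx => (Finset.mem_erase.mp (hT hx)).1 rfl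
    rw [qdiff_bump_update h v i T, if_neg hvT, sub_zero]
  · have : ∀ T ∈ (S.erase v).powerset,
        (G.bump v).qdiff (Function.update K v (K v + (2 * i + 1))) (eVec (insert v T))
          = G.qdiff (G.chAdd K (eVec {v})) (eVec T) + (G.qdiff K (eVec {v}) - (i + 1)) := by
      intro T hT
      rw [Finset.mem_powerset] at hT
      have hvT : v ∉ T := fun hx => (Finset.mem_erase.mp (hT hx)).1 rfl
      rw [qdiff_bump_update h v i (insert v T), if_pos (Finset.mem_insert_self v T),
        qdiff_insert h v hvT]
      ring
    rw [Finset.sup'_congr _ rfl this, sup'_add_const]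
    ring

end WGraph

end Aux

section Aux2

variable {V : Type*} [Fintype V] [DecidableEq V]

namespace WGraph

variable {G : WGraph V}

theorem Ch.evenSh_val (K : G.Ch) (v : V) (k : ℤ) :
    (K.evenSh v k).1 = Function.update K.1 v (K.1 v + 2 * k) := rfl

theorem Ch.bumpSh_val (K : G.Ch) (v : V) (i : ℤ) :
    (K.bumpSh v i).1 = Function.update K.1 v (K.1 v + (2 * i + 1)) := rfl

theorem Ch.evenSh_zero (K : G.Ch) (v : V) : K.evenSh v 0 = K := by
  apply Subtype.ext
  show Function.update K.1 v (K.1 v + 2 * 0) = K.1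
  rw [mul_zero, add_zero, Function.update_eq_self]

theorem Ch.evenSh_inj {K : G.Ch} {v : V} {k k' : ℤ}
    (h : K.evenSh v k = K.evenSh v k') : k = k' := by
  have h2 := congrFun (congrArg Subtype.val h) v
  rw [Ch.evenSh_val, Ch.evenSh_val, Function.update_self, Function.update_self] at h2
  omega

theorem Ch.bumpSh_evenSh (K : G.Ch) (v : V) (i k : ℤ) :
    (K.evenSh v k).bumpSh v (i - k) = K.bumpSh v i := by
  apply Subtype.ext
  show Function.update (Function.update K.1 v (K.1 v + 2 * k)) v
      ((Function.update K.1 v (K.1 v + 2 * k)) v + (2 * (i - k) + 1))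
    = Function.update K.1 v (K.1 v + (2 * i + 1))
  rw [Function.update_self, Function.update_idem]
  congr 1
  ring

theorem Ch.bumpSh_eq_imp {K K' : G.Ch} {v : V} {i j : ℤ}
    (h : K'.bumpSh v j = K.bumpSh v i) : K' = K.evenSh v (i - j) := by
  have h1 := congrArg Subtype.val h
  rw [Ch.bumpSh_val, Ch.bumpSh_val] at h1
  apply Subtype.ext
  funext u
  rcases eq_or_ne u v with rfl | hu
  · have h2 := congrFun h1 u
    rw [Function.update_self, Function.update_self] at h2
    show K'.1 u = Function.update K.1 u (K.1 u + 2 * (i - j)) u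
    rw [Function.update_self]
    omega
  · have h2 := congrFun h1 u
    rw [Function.update_of_ne hu, Function.update_of_ne hu] at h2
    show K'.1 u = Function.update K.1 v (K.1 v + 2 * (i - j)) u
    rw [Function.update_of_ne hu]
    exact h2

theorem cExp_eval (v : V) (K : G.Ch) {S : Finset V} (hv : v ∈ S)
    (hr : rVal G v K S = 0) (i k : ℤ) :
    cExp G v (i - k) (K.evenSh v k) S
      = max (G.qrel K.1 (S.erase v)) (G.qrel K.1 (S.erase v) - k)
        - max (G.qrel K.1 (S.erase v)) (G.qrel K.1 (S.erase v) - (i + 1))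
        + (i - k) * (i - k + 1) / 2 := by
  have hb : G.qdiff K.1 (eVec {v}) + G.qrel (G.chAdd K.1 (eVec {v})) (S.erase v)
      = G.qrel K.1 (S.erase v) := by
    unfold rVal at hr
    omega
  unfold cExp
  rw [Ch.bumpSh_evenSh K v i k]
  rw [show (K.evenSh v k).1 = Function.update K.1 v (K.1 v + 2 * k) from rfl,
    show (K.bumpSh v i).1 = Function.update K.1 v (K.1 v + (2 * i + 1)) from rfl,
    qrel_update_even K.2 hv k, qrel_bump_update K.2 hv i, hb]

end WGraph

/- ## triangular-number arithmetic -/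

theorem tri_dvd (m : ℤ) : 2 ∣ m * (m + 1) := by
  obtain ⟨k, hk⟩ := Int.even_mul_succ_self m
  exact ⟨k, by omega⟩

theorem tri_nonneg (m : ℤ) : 0 ≤ m * (m + 1) := by
  rcases le_or_gt 0 m with h | h
  · positivity
  · nlinarith

theorem tri_pos (m : ℤ) (h0 : m ≠ 0) (h1 : m ≠ -1) : 2 ≤ m * (m + 1) := by
  rcases le_or_gt m (-2) with h | h
  · nlinarith
  · have : 1 ≤ m := by omega
    nlinarith

theorem arith_pos (a i k : ℤ) (hi : 0 ≤ i) :
    0 ≤ max a (a - k) - max a (a - (i + 1)) + (i - k) * (i - k + 1) / 2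
    ∧ (max a (a - k) - max a (a - (i + 1)) + (i - k) * (i - k + 1) / 2 = 0
        ↔ k = i ∨ k = i + 1) := by
  rw [max_eq_left (show a - (i + 1) ≤ a by omega)]
  have hd := tri_dvd (i - k)
  have hn := tri_nonneg (i - k)
  obtain ⟨p, hp⟩ := hd
  rw [hp] at hn ⊢
  by_cases hk : k = i ∨ k = i + 1
  · have hP : (i - k) * (i - k + 1) = 0 := by
      rcases hk with rfl | rfl <;> ring
    rw [hP] at hp
    rcases le_or_gt 0 k with h | h
    · rw [max_eq_left (show a - k ≤ a by omega)]
      omega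
    · rw [max_eq_right (show a ≤ a - k by omega)]
      omega
  · push_neg at hk
    have h2 : 2 ≤ (i - k) * (i - k + 1) := tri_pos (i - k) (by omega) (by omega)
    rw [hp] at h2
    rcases le_or_gt 0 k with h | h
    · rw [max_eq_left (show a - k ≤ a by omega)]
      omega
    · rw [max_eq_right (show a ≤ a - k by omega)]
      omega

theorem arith_neg1 (a k : ℤ) :
    0 ≤ max a (a - k) - max a (a - (-1 + 1)) + (-1 - k) * (-1 - k + 1) / 2
    ∧ (max a (a - k) - max a (a - (-1 + 1)) + (-1 - k) * (-1 - k + 1) / 2 = 0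
        ↔ k = 0) := by
  rw [show a - (-1 + 1) = a by ring, max_self]
  have hd := tri_dvd (-1 - k)
  have hn := tri_nonneg (-1 - k)
  obtain ⟨p, hp⟩ := hd
  rw [hp] at hn ⊢
  by_cases hk : k = 0 ∨ k = -1
  · have hP : (-1 - k) * (-1 - k + 1) = 0 := by
      rcases hk with rfl | rfl <;> ring
    rw [hP] at hp
    rcases le_or_gt 0 k with h | h
    · rw [max_eq_left (show a - k ≤ a by omega)]
      omega
    · rw [max_eq_right (show a ≤ a - k by omega)]
      omega
  · push_neg at hk
    have h2 : 2 ≤ (-1 - k) * (-1 - k + 1) := tri_pos (-1 - k) (by omega) (by omega)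
    rw [hp] at h2
    rcases le_or_gt 0 k with h | h
    · rw [max_eq_left (show a - k ≤ a by omega)]
      omega
    · rw [max_eq_right (show a ≤ a - k by omega)]
      omega

theorem arith_neg2 (a i k : ℤ) (hi : i ≤ -2) :
    0 ≤ max a (a - k) - max a (a - (i + 1)) + (i - k) * (i - k + 1) / 2
    ∧ (max a (a - k) - max a (a - (i + 1)) + (i - k) * (i - k + 1) / 2 = 0
        ↔ k = i + 1 ∨ k = i + 2) := by
  rw [max_eq_right (show a ≤ a - (i + 1) by omega)]
  have hd := tri_dvd (i - k)
  have hn := tri_nonneg (i - k)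
  obtain ⟨p, hp⟩ := hd
  rw [hp] at hn ⊢
  by_cases hk : k = i + 1 ∨ k = i + 2
  · have hP : (i - k) * (i - k + 1) = 0 ∨ (i - k) * (i - k + 1) = 2 := by
      rcases hk with rfl | rfl
      · left; ring
      · right; ring
    rcases hk with rfl | rfl
    · rw [max_eq_right (show a ≤ a - (i + 1) by omega)]
      omega
    · rcases le_or_gt 0 (i + 2 : ℤ) with h | h
      · rw [max_eq_left (show a - (i + 2) ≤ a by omega)]
        omega
      · rw [max_eq_right (show a ≤ a - (i + 2) by omega)]
        omega
  · push_neg at hk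
    have h2 : 2 ≤ (i - k + 1) * (i - k + 1 + 1) :=
      tri_pos (i - k + 1) (by omega) (by omega)
    have hrel : (i - k + 1) * (i - k + 1 + 1) = (i - k) * (i - k + 1) + 2 * (i - k + 1) := by
      ring
    rw [hp] at hrel
    rw [hrel] at h2
    rcases le_or_gt 0 k with h | h
    · rw [max_eq_left (show a - k ≤ a by omega)]
      omega
    · rw [max_eq_right (show a ≤ a - k by omega)]
      omega

/- ## the key Finsupp computation -/

open Classical in
theorem dual_apply {G : WGraph V} (p q : G.Ch × Finset V) (m : ℕ) :
    dual p m q = if p = q then Um m else 0 := by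
  rcases eq_or_ne p q with rfl | h
  · rw [if_pos rfl]
    exact Finsupp.single_eq_same
  · rw [if_neg h]
    exact Finsupp.single_eq_of_ne' h

theorem A_dual_key {G : WGraph V} {v : V} {A : Cplus (G.bump v) → Cplus G}
    (hA : IsA G v A) (K : G.Ch) (S : Finset V) (i : ℤ) (roots : Finset ℤ)
    (hroot : ∀ k : ℤ, 0 ≤ cExp G v (i - k) (K.evenSh v k) S
      ∧ (cExp G v (i - k) (K.evenSh v k) S = 0 ↔ k ∈ roots)) :
    A (dual (K.bumpSh v i, S) 0) = ∑ k ∈ roots, dual (K.evenSh v k, S) 0 := by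
  classical
  refine Finsupp.ext fun p => ?_
  obtain ⟨K', S'⟩ := p
  rw [hA, Finsupp.finset_sum_apply]
  by_cases hS : S' = S
  · subst hS
    by_cases hK : ∃ k : ℤ, K' = K.evenSh v k
    · obtain ⟨k₀, rfl⟩ := hK
      have hterm : ∀ j : ℤ, j ≠ i - k₀ →
          Upow (cExp G v j (K.evenSh v k₀) S')
            ((dual (K.bumpSh v i, S') 0) ((K.evenSh v k₀).bumpSh v j, S')) = 0 := by
        intro j hj
        have hne : (K.bumpSh v i, S') ≠ ((K.evenSh v k₀).bumpSh v j, S') := by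
          intro hEq
          have h1 : K.bumpSh v i = (K.evenSh v k₀).bumpSh v j := congrArg Prod.fst hEq
          have h2 := congrFun (congrArg Subtype.val h1) v
          rw [WGraph.Ch.bumpSh_val, WGraph.Ch.bumpSh_val, Function.update_self,
            Function.update_self, WGraph.Ch.evenSh_val, Function.update_self] at h2
          omega
        rw [dual_apply, if_neg hne, Upow_zero]
      rw [finsum_eq_single _ (i - k₀) hterm, WGraph.Ch.bumpSh_evenSh K v i k₀,
        dual_apply, if_pos rfl]
      have hR : ∀ k ∈ roots, dual (K.evenSh v k, S') 0 (K.evenSh v k₀, S')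
          = if k = k₀ then Um 0 else 0 := by
        intro k _
        rw [dual_apply]
        by_cases hkk : k = k₀
        · subst hkk
          rw [if_pos rfl, if_pos rfl]
        · rw [if_neg (fun h => hkk (WGraph.Ch.evenSh_inj (congrArg Prod.fst h))),
            if_neg hkk]
      rw [Finset.sum_congr rfl hR, Finset.sum_ite_eq' roots k₀ (fun _ => Um 0)]
      by_cases hmem : k₀ ∈ roots
      · rw [if_pos hmem, (hroot k₀).2.mpr hmem, Upow_zero_eq]
      · rw [if_neg hmem]
        have hpos : 0 < cExp G v (i - k₀) (K.evenSh v k₀) S' :=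
          lt_of_le_of_ne (hroot k₀).1 (fun h => hmem ((hroot k₀).2.mp h.symm))
        exact Upow_pos_Um0 _ hpos
    · have hz : ∀ j : ℤ, Upow (cExp G v j K' S')
          ((dual (K.bumpSh v i, S') 0) (K'.bumpSh v j, S')) = 0 := by
        intro j
        have hne : (K.bumpSh v i, S') ≠ (K'.bumpSh v j, S') := by
          intro h
          exact hK ⟨i - j, WGraph.Ch.bumpSh_eq_imp (congrArg Prod.fst h).symm⟩
        rw [dual_apply, if_neg hne, Upow_zero]
      rw [finsum_congr hz, finsum_zero]
      symm
      refine Finset.sum_eq_zero fun k hk => ?_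
      rw [dual_apply, if_neg]
      intro h
      exact hK ⟨k, (congrArg Prod.fst h).symm⟩
  · have hz : ∀ j : ℤ, Upow (cExp G v j K' S')
        ((dual (K.bumpSh v i, S) 0) (K'.bumpSh v j, S')) = 0 := by
      intro j
      have hne : (K.bumpSh v i, S) ≠ (K'.bumpSh v j, S') := by
        intro h
        exact hS (congrArg Prod.snd h).symm
      rw [dual_apply, if_neg hne, Upow_zero]
    rw [finsum_congr hz, finsum_zero]
    symm
    refine Finset.sum_eq_zero fun k hk => ?_
    rw [dual_apply, if_neg]
    intro h
    exact hS (congrArg Prod.snd h).symm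

end Aux2

/-- Suppose `v ∈ S` and `(K,t)` is a characteristic vector of `G` with
`r((K,t),S) = 0`.  Then for every `i ∈ ℤ`:
`A(((K,t+2i+1),S)^∨) = ((K,t+2i),S)^∨ + ((K,t+2i+2),S)^∨` if `i ≥ 0`;
`A(((K,t+2i+1),S)^∨) = ((K,t),S)^∨` if `i = −1`; and
`A(((K,t+2i+1),S)^∨) = ((K,t+2i+2),S)^∨ + ((K,t+2i+4),S)^∨` if `i ≤ −2`. -/
theorem A_dual_of_mem (G : WGraph V) (v : V)
    (A : Cplus (G.bump v) → Cplus G) (hA : IsA G v A)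
    (K : G.Ch) (S : Finset V) (hv : v ∈ S) (hr : rVal G v K S = 0) (i : ℤ) :
    (0 ≤ i → A (dual (K.bumpSh v i, S) 0)
        = dual (K.evenSh v i, S) 0 + dual (K.evenSh v (i + 1), S) 0) ∧
    (i = -1 → A (dual (K.bumpSh v i, S) 0) = dual (K, S) 0) ∧
    (i ≤ -2 → A (dual (K.bumpSh v i, S) 0)
        = dual (K.evenSh v (i + 1), S) 0 + dual (K.evenSh v (i + 2), S) 0) := by
  classical
  refine ⟨fun hi => ?_, fun hi => ?_, fun hi => ?_⟩
  · have hroot : ∀ k : ℤ, 0 ≤ cExp G v (i - k) (K.evenSh v k) S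
        ∧ (cExp G v (i - k) (K.evenSh v k) S = 0 ↔ k ∈ ({i, i + 1} : Finset ℤ)) := by
      intro k
      rw [WGraph.cExp_eval v K hv hr i k]
      refine ⟨(arith_pos (G.qrel K.1 (S.erase v)) i k hi).1, ?_⟩
      rw [(arith_pos (G.qrel K.1 (S.erase v)) i k hi).2]
      simp [Finset.mem_insert, Finset.mem_singleton]
    rw [A_dual_key hA K S i {i, i + 1} hroot,
      Finset.sum_insert (by rw [Finset.mem_singleton]; omega), Finset.sum_singleton]
  · subst hi
    have hroot : ∀ k : ℤ, 0 ≤ cExp G v (-1 - k) (K.evenSh v k) S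
        ∧ (cExp G v (-1 - k) (K.evenSh v k) S = 0 ↔ k ∈ ({0} : Finset ℤ)) := by
      intro k
      rw [WGraph.cExp_eval v K hv hr (-1) k]
      refine ⟨(arith_neg1 (G.qrel K.1 (S.erase v)) k).1, ?_⟩
      rw [(arith_neg1 (G.qrel K.1 (S.erase v)) k).2]
      simp
    rw [A_dual_key hA K S (-1) {0} hroot, Finset.sum_singleton, WGraph.Ch.evenSh_zero]
  · have hroot : ∀ k : ℤ, 0 ≤ cExp G v (i - k) (K.evenSh v k) S
        ∧ (cExp G v (i - k) (K.evenSh v k) S = 0 ↔ k ∈ ({i + 1, i + 2} : Finset ℤ)) := by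
      intro k
      rw [WGraph.cExp_eval v K hv hr i k]
      refine ⟨(arith_neg2 (G.qrel K.1 (S.erase v)) i k hi).1, ?_⟩
      rw [(arith_neg2 (G.qrel K.1 (S.erase v)) i k hi).2]
      simp [Finset.mem_insert, Finset.mem_singleton]
    rw [A_dual_key hA K S i {i + 1, i + 2} hroot,
      Finset.sum_insert (by rw [Finset.mem_singleton]; omega), Finset.sum_singleton]

end
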